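/- Let Z be a compact metric space and let φ be a continuous flow on Z (a continuous action of the additive group ℝ on Z). Let Λ ⊆ Z be a nonempty compact invariant set that is locally maximal, i.e. there exists an open set U ⊇ Λ such that every compact invariant set Λ' ⊆ U satisfies Λ' ⊆ Λ. Let 𝒵 be any subset of the space of nonempty compact invariant subsets of Z, equipped with the Hausdorff metric, such that 𝒵 is connected and Λ ∈ 𝒵. Then Λ is maximal with respect to inclusion in 𝒵: every Λ' ∈ 𝒵 with Λ ⊆ Λ' satisfies Λ' = Λ. -/

import Mathlib

open TopologicalSpace EMetric Metric Set

/-- Conley-type lemma: a locally maximal compact invariant set of a continuous flow on a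
compact metric space is maximal with respect to inclusion in any connected family (for the
Hausdorff metric) of nonempty compact invariant sets containing it. -/
theorem locallyMaximal_is_maximal_in_connected_family
    {Z : Type*} [MetricSpace Z] [CompactSpace Z]
    (φ : Flow ℝ Z)
    (Λ : TopologicalSpace.NonemptyCompacts Z)
    (hΛinv : ∀ t : ℝ, φ t '' (Λ : Set Z) = (Λ : Set Z))
    (hmax : ∃ U : Set Z, IsOpen U ∧ (Λ : Set Z) ⊆ U ∧
      ∀ Λ' : Set Z, IsCompact Λ' → (∀ t : ℝ, φ t '' Λ' = Λ') → Λ' ⊆ U → Λ' ⊆ (Λ : Set Z))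
    (𝒵 : Set (TopologicalSpace.NonemptyCompacts Z))
    (h𝒵inv : ∀ K ∈ 𝒵, ∀ t : ℝ, φ t '' (K : Set Z) = (K : Set Z))
    (h𝒵conn : IsConnected 𝒵)
    (hΛmem : Λ ∈ 𝒵) :
    ∀ K ∈ 𝒵, (Λ : Set Z) ⊆ (K : Set Z) → K = Λ := by
  obtain ⟨U, hUopen, hΛU, hU⟩ := hmax
  haveI : ConnectedSpace 𝒵 := Subtype.connectedSpace h𝒵conn
  -- edist of nonempty compacts is the Hausdorff edistance
  have hedist : ∀ K L : NonemptyCompacts Z,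
      edist K L = EMetric.hausdorffEdist (K : Set Z) (L : Set Z) := fun _ _ => rfl
  -- The subfamily of elements of 𝒵 contained in Λ
  set A : Set 𝒵 := {x | ((x : NonemptyCompacts Z) : Set Z) ⊆ (Λ : Set Z)} with hA
  -- A is open
  have hAopen : IsOpen A := by
    rw [EMetric.isOpen_iff]
    intro x hx
    obtain ⟨δ, hδpos, hδ⟩ := Λ.isCompact.exists_thickening_subset_open hUopen hΛU
    refine ⟨ENNReal.ofReal δ, ENNReal.ofReal_pos.2 hδpos, ?_⟩
    intro y hy
    have hyx : EMetric.hausdorffEdist ((y : NonemptyCompacts Z) : Set Z)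
        ((x : NonemptyCompacts Z) : Set Z) < ENNReal.ofReal δ := by
      rw [← hedist]; exact hy
    have hsub : ((y : NonemptyCompacts Z) : Set Z) ⊆ U := by
      intro z hz
      obtain ⟨w, hw, hzw⟩ := EMetric.exists_edist_lt_of_hausdorffEdist_lt hz hyx
      have : z ∈ Metric.thickening δ (Λ : Set Z) :=
        (Metric.mem_thickening_iff_exists_edist_lt _ _).2 ⟨w, hx hw, hzw⟩
      exact hδ this
    exact hU _ (y : NonemptyCompacts Z).isCompact (h𝒵inv _ y.2) hsub
  -- A is closed
  have hAclosed : IsClosed A := by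
    rw [← isOpen_compl_iff, EMetric.isOpen_iff]
    intro x hx
    simp only [hA, mem_compl_iff, mem_setOf_eq] at hx
    obtain ⟨z, hz, hzΛ⟩ := not_subset.1 hx
    have hεpos : 0 < Metric.infEDist z (Λ : Set Z) := by
      rw [Metric.infEDist_pos_iff_notMem_closure]
      rwa [Λ.isCompact.isClosed.closure_eq]
    refine ⟨_, hεpos, ?_⟩
    intro y hy
    have hxy : EMetric.hausdorffEdist ((x : NonemptyCompacts Z) : Set Z)
        ((y : NonemptyCompacts Z) : Set Z) < Metric.infEDist z (Λ : Set Z) := by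
      rw [← hedist, edist_comm]; exact hy
    obtain ⟨w, hw, hzw⟩ := EMetric.exists_edist_lt_of_hausdorffEdist_lt hz hxy
    simp only [hA, mem_compl_iff, mem_setOf_eq]
    intro hcon
    exact absurd (EMetric.infEdist_le_edist_of_mem (hcon hw)) (not_le.2 hzw)
  -- A is everything
  have hAuniv : A = Set.univ := by
    rcases isClopen_iff.1 ⟨hAclosed, hAopen⟩ with h | h
    · exact absurd h (Set.nonempty_iff_ne_empty.1 ⟨⟨Λ, hΛmem⟩, (subset_rfl : (Λ : Set Z) ⊆ (Λ : Set Z))⟩)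
    · exact h
  intro K hK hΛK
  have hKΛ : (K : Set Z) ⊆ (Λ : Set Z) := by
    have : (⟨K, hK⟩ : 𝒵) ∈ A := hAuniv ▸ Set.mem_univ _
    exact this
  exact TopologicalSpace.NonemptyCompacts.ext (subset_antisymm hKΛ hΛK)
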